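/- Let (A,d) be a simply-connected dga of finite type and let [ν] ∈ H^N(A,d) be a nonzero cohomology class with N ≥ 4. Then there exist a dga (Ā,d) whose cohomology is a Poincaré duality algebra of formal dimension N and a dga morphism q : (A,d) → (Ā,d) such that H^N(q)([ν]) ≠ 0; in particular H^N(q)([ν]) is a nonzero multiple of the fundamental class of H^N(Ā,d). -/

import Mathlib

/-- A graded-commutative, associative, unital `ℚ`-algebra with an `ℕ`-grading. -/
structure GradedCommAlg where
  carrier : Type
  [ring : Ring carrier]
  [algebra : Algebra ℚ carrier]
  grading : ℕ → Submodule ℚ carrier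
  internal : DirectSum.IsInternal grading
  one_mem : (1 : carrier) ∈ grading 0
  mul_mem : ∀ {i j : ℕ} {x y : carrier}, x ∈ grading i → y ∈ grading j → x * y ∈ grading (i + j)
  gcomm : ∀ {i j : ℕ} {x y : carrier}, x ∈ grading i → y ∈ grading j →
      x * y = ((-1 : ℚ) ^ (i * j)) • (y * x)

attribute [instance] GradedCommAlg.ring GradedCommAlg.algebra

/-- A connected differential graded algebra (dga) over `ℚ`. -/
structure ConnectedDGA extends GradedCommAlg where
  connected : ∀ x ∈ grading 0, ∃ q : ℚ, x = q • (1 : carrier)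
  d : carrier →ₗ[ℚ] carrier
  d_deg : ∀ {k : ℕ} {x : carrier}, x ∈ grading k → d x ∈ grading (k + 1)
  d_sq : ∀ x, d (d x) = 0
  leibniz : ∀ {i : ℕ} {x y : carrier}, x ∈ grading i →
      d (x * y) = d x * y + ((-1 : ℚ) ^ i) • (x * d y)

namespace ConnectedDGA

/-- `x` is a coboundary, i.e. represents `0` in cohomology. -/
def IsCoboundary (A : ConnectedDGA) (x : A.carrier) : Prop := ∃ y, A.d y = x

/-- The (two-sided, by graded-commutativity) ideal generated by a set `S`. -/
def mulIdeal (A : ConnectedDGA) (S : Set A.carrier) : Submodule ℚ A.carrier :=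
  Submodule.span ℚ {x : A.carrier | ∃ r : A.carrier, ∃ s ∈ S, x = r * s}

end ConnectedDGA

namespace PDProof
open DirectSum

theorem dual_factor {V W : Type*} [AddCommGroup V] [Module ℚ V] [AddCommGroup W] [Module ℚ W]
    [FiniteDimensional ℚ W] (D : V →ₗ[ℚ] W) (f : V →ₗ[ℚ] ℚ)
    (G : Submodule ℚ (Module.Dual ℚ W))
    (hf : ∀ v, (∀ g ∈ G, g (D v) = 0) → f v = 0) :
    ∃ g ∈ G, ∀ v, g (D v) = f v := by
  classical
  obtain ⟨σ, hσ⟩ := D.rangeRestrict.exists_rightInverse_of_surjective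
    (LinearMap.range_rangeRestrict D)
  have hDσ : ∀ r : LinearMap.range D, D (σ r) = (r : W) := by
    intro r
    have h1 : D.rangeRestrict (σ r) = r := by
      rw [← LinearMap.comp_apply, hσ, LinearMap.id_apply]
    exact congrArg Subtype.val h1
  have hker : ∀ v, D v = 0 → f v = 0 := fun v hv => hf v (fun g _ => by rw [hv, map_zero])
  have hfac : ∀ v, f (σ (D.rangeRestrict v)) = f v := by
    intro v
    have h0 : f (σ (D.rangeRestrict v) - v) = 0 := by
      refine hker _ ?_
      rw [map_sub, hDσ]
      simp
    rw [map_sub] at h0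
    exact sub_eq_zero.mp h0
  obtain ⟨ρ, hρ⟩ := LinearMap.exists_leftInverse_of_injective (K := ℚ)
    ((LinearMap.range D).subtype) (Submodule.ker_subtype _)
  have hρ' : ∀ r : LinearMap.range D, ρ (r : W) = r := fun r => DFunLike.congr_fun hρ r
  set h₂ : Module.Dual ℚ W := (f ∘ₗ σ) ∘ₗ ρ with hh₂
  have hmem : h₂ ∈ (G.dualCoannihilator ⊓ LinearMap.range D).dualAnnihilator := by
    rw [Submodule.mem_dualAnnihilator]
    intro w hw0
    obtain ⟨hwT, hwR⟩ := Submodule.mem_inf.mp hw0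
    have hw : ρ w = (⟨w, hwR⟩ : LinearMap.range D) := hρ' ⟨w, hwR⟩
    have : h₂ w = f (σ ⟨w, hwR⟩) := by rw [hh₂]; simp [hw]
    rw [this]
    refine hf _ ?_
    intro g hg
    rw [hDσ]
    rw [Submodule.mem_dualCoannihilator] at hwT
    exact hwT g hg
  rw [Subspace.dualAnnihilator_inf_eq, Subspace.dualCoannihilator_dualAnnihilator_eq] at hmem
  obtain ⟨g, hgG, r', hr', hsum⟩ := Submodule.mem_sup.mp hmem
  refine ⟨g, hgG, fun v => ?_⟩
  rw [Submodule.mem_dualAnnihilator] at hr'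
  have h1 : r' (D v) = 0 := hr' (D v) ⟨v, rfl⟩
  have h2 : h₂ (D v) = f v := by
    have hw : ρ (D v) = D.rangeRestrict v := by
      have := hρ' (D.rangeRestrict v)
      simpa using this
    rw [hh₂]
    simp only [LinearMap.comp_apply, hw]
    exact hfac v
  have := congrArg (fun (φ : Module.Dual ℚ W) => φ (D v)) hsum
  simp only [LinearMap.add_apply] at this
  rw [h2, h1, add_zero] at this
  rw [this]


variable (A : ConnectedDGA)

noncomputable def dec : DirectSum.Decomposition A.grading := A.internal.chooseDecomposition

noncomputable def comp (k : ℕ) : A.carrier →ₗ[ℚ] A.carrier :=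
  letI := dec A
  (A.grading k).subtype ∘ₗ (DFinsupp.lapply k) ∘ₗ (DirectSum.decomposeLinearEquiv A.grading).toLinearMap

variable {A}

theorem comp_mem (k : ℕ) (x : A.carrier) : comp A k x ∈ A.grading k := by
  letI := dec A
  exact ((DirectSum.decompose A.grading x) k).2

theorem comp_of_mem {k : ℕ} {x : A.carrier} (h : x ∈ A.grading k) : comp A k x = x := by
  letI := dec A
  exact DirectSum.decompose_of_mem_same A.grading h

theorem comp_of_mem_ne {j k : ℕ} {x : A.carrier} (h : x ∈ A.grading j) (hjk : j ≠ k) :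
    comp A k x = 0 := by
  letI := dec A
  exact DirectSum.decompose_of_mem_ne A.grading h hjk

theorem hom_induction {p : A.carrier → Prop} (h_zero : p 0)
    (h_add : ∀ x y, p x → p y → p (x + y))
    (h_hom : ∀ (k : ℕ) (x : A.carrier), x ∈ A.grading k → p x) : ∀ x, p x := by
  letI := dec A
  intro x
  refine DirectSum.Decomposition.inductionOn A.grading h_zero (fun {i} m => h_hom i m m.2)
    (fun _ _ hm hm' => h_add _ _ hm hm') x

theorem comp_d (k : ℕ) (x : A.carrier) : comp A (k + 1) (A.d x) = A.d (comp A k x) := by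
  induction x using hom_induction with
  | h_zero => simp
  | h_add x y hx hy => simp [map_add, hx, hy]
  | h_hom j x hx =>
    rcases eq_or_ne j k with rfl | hjk
    · rw [comp_of_mem hx, comp_of_mem (A.d_deg hx)]
    · rw [comp_of_mem_ne hx hjk, comp_of_mem_ne (A.d_deg hx) (by omega), map_zero]

/-- `x` as a finite sum of homogeneous components lying in a submodule. -/
theorem mem_of_comp_mem {J : Submodule ℚ A.carrier} {x : A.carrier}
    (h : ∀ k, comp A k x ∈ J) : x ∈ J := by
  classical
  letI := dec A
  rw [← DirectSum.sum_support_decompose A.grading x]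
  exact Submodule.sum_mem _ fun i _ => h i

end PDProof

namespace PDProof

variable {A : ConnectedDGA}

/-- A functional detecting the class of `ν`, supported in degree `N`, killing coboundaries. -/
structure PhiData (A : ConnectedDGA) (N : ℕ) (ν : A.carrier) where
  φ : A.carrier →ₗ[ℚ] ℚ
  vanish : ∀ ⦃k : ℕ⦄, k ≠ N → ∀ ⦃x : A.carrier⦄, x ∈ A.grading k → φ x = 0
  vanish_d : ∀ x, φ (A.d x) = 0
  map_ν : φ ν = 1

variable {N : ℕ} {ν : A.carrier}

theorem exists_phiData (hν : ν ∈ A.grading N) (hN : 1 ≤ N) (hnz : ¬ ∃ y, A.d y = ν) :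
    Nonempty (PhiData A N ν) := by
  classical
  set U : Submodule ℚ A.carrier :=
    (⨆ k, ⨆ (_ : k ≠ N), A.grading k) ⊔ LinearMap.range A.d with hU
  have hcompU : ∀ u ∈ U, comp A N u = A.d (comp A (N - 1) u) + 0 → True := fun _ _ _ => trivial
  have hνU : ν ∉ U := by
    intro hmem
    rw [hU, Submodule.mem_sup] at hmem
    obtain ⟨u, hu, w, hw, huw⟩ := hmem
    obtain ⟨y, rfl⟩ := hw
    have hcu : comp A N u = 0 := by
      refine Submodule.iSup_induction (motive := fun z => comp A N z = 0)
        (fun k => ⨆ (_ : k ≠ N), A.grading k) hu ?_ (map_zero _) ?_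
      · intro k x hx
        have hx' : x ∈ ⨆ (_ : k ≠ N), A.grading k := hx
        rcases eq_or_ne k N with rfl | hk
        · rw [iSup_neg (not_not_intro rfl)] at hx'
          rw [Submodule.mem_bot] at hx'
          rw [hx', map_zero]
        · rw [iSup_pos hk] at hx'
          exact comp_of_mem_ne hx' hk
      · intro x y hx hy
        rw [map_add, hx, hy, add_zero]
    obtain ⟨M, rfl⟩ : ∃ M, N = M + 1 := ⟨N - 1, by omega⟩
    have hres : ν = A.d (comp A M y) := by
      conv_lhs => rw [← comp_of_mem hν, ← huw]
      rw [map_add, hcu, zero_add, comp_d]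
    exact hnz ⟨_, hres.symm⟩
  obtain ⟨f, hf, hmap⟩ := U.exists_dual_map_eq_bot_of_notMem hνU inferInstance
  have hfU : ∀ x ∈ U, f x = 0 := by
    intro x hx
    have : f x ∈ U.map f := ⟨x, hx, rfl⟩
    rwa [hmap, Submodule.mem_bot] at this
  refine ⟨⟨(f ν)⁻¹ • f, ?_, ?_, ?_⟩⟩
  · intro k hk x hx
    have : f x = 0 := hfU x (le_sup_left (a := (⨆ k, ⨆ (_ : k ≠ N), A.grading k)) <|
      Submodule.mem_iSup_of_mem k (by rw [iSup_pos hk]; exact hx))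
    simp [this]
  · intro x
    have : f (A.d x) = 0 := hfU _ (le_sup_right (b := LinearMap.range A.d) ⟨x, rfl⟩)
    simp [this]
  · simp [inv_mul_cancel₀ hf]

namespace PhiData

variable (P : PhiData A N ν)

/-- vanishing on products of wrong total degree -/
theorem phi_hom {i j : ℕ} {x y : A.carrier} (hx : x ∈ A.grading i) (hy : y ∈ A.grading j)
    (hij : i + j ≠ N) : P.φ (x * y) = 0 :=
  P.vanish hij (A.mul_mem hx hy)

/-- `x` can be replaced by its component in complementary degree -/
theorem phi_comp_mul {j k : ℕ} {y : A.carrier} (hy : y ∈ A.grading j) (hjk : k + j = N)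
    (x : A.carrier) : P.φ (x * y) = P.φ (comp A k x * y) := by
  induction x using hom_induction with
  | h_zero => simp
  | h_add x x' hx hx' => simp only [add_mul, map_add, hx, hx']
  | h_hom i x hx =>
    rcases eq_or_ne i k with rfl | hik
    · rw [comp_of_mem hx]
    · rw [P.phi_hom hx hy (by omega), comp_of_mem_ne hx hik, zero_mul, map_zero]

def Orth (P : PhiData A N ν) (x : A.carrier) : Prop := ∀ y, P.φ (x * y) = 0

theorem orth_reduce {i : ℕ} {x : A.carrier} (hx : x ∈ A.grading i) (hiN : i ≤ N)
    (h : ∀ u ∈ A.grading (N - i), P.φ (x * u) = 0) : P.Orth x := by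
  intro y
  induction y using hom_induction with
  | h_zero => simp
  | h_add y y' hy hy' => rw [mul_add, map_add, hy, hy', add_zero]
  | h_hom j y hy =>
    rcases eq_or_ne (i + j) N with hij | hij
    · exact h y (by convert hy using 2; omega)
    · exact P.phi_hom hx hy hij

theorem orth_of_deg_gt {i : ℕ} {x : A.carrier} (hx : x ∈ A.grading i) (hiN : N < i) :
    P.Orth x := by
  intro y
  induction y using hom_induction with
  | h_zero => simp
  | h_add y y' hy hy' => rw [mul_add, map_add, hy, hy', add_zero]
  | h_hom j y hy => exact P.phi_hom hx hy (by omega)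

/-- The orthogonal differential ideal. -/
def J (P : PhiData A N ν) : Submodule ℚ A.carrier where
  carrier := {x | P.Orth x ∧ P.Orth (A.d x)}
  add_mem' := by
    rintro x x' ⟨h1, h2⟩ ⟨h1', h2'⟩
    refine ⟨fun y => ?_, fun y => ?_⟩
    · rw [add_mul, map_add, h1 y, h1' y, add_zero]
    · rw [map_add, add_mul, map_add, h2 y, h2' y, add_zero]
  zero_mem' := ⟨fun y => by simp, fun y => by simp⟩
  smul_mem' := by
    rintro q x ⟨h1, h2⟩
    refine ⟨fun y => ?_, fun y => ?_⟩
    · rw [smul_mul_assoc, map_smul, h1 y, smul_zero]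
    · rw [map_smul, smul_mul_assoc, map_smul, h2 y, smul_zero]

theorem orth_of_mem_J {x : A.carrier} (hx : x ∈ P.J) : P.Orth x := hx.1

theorem mem_J (x : A.carrier) : x ∈ P.J ↔ P.Orth x ∧ P.Orth (A.d x) := Iff.rfl

theorem phi_eq_zero_of_mem_J {x : A.carrier} (hx : x ∈ P.J) : P.φ x = 0 := by
  simpa using hx.1 1

theorem d_mem_J {x : A.carrier} (hx : x ∈ P.J) : A.d x ∈ P.J :=
  ⟨hx.2, by intro y; rw [A.d_sq, zero_mul, map_zero]⟩

theorem orth_comp {x : A.carrier} (hx : P.Orth x) (k : ℕ) : P.Orth (comp A k x) := by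
  intro y
  induction y using hom_induction with
  | h_zero => simp
  | h_add y y' hy hy' => rw [mul_add, map_add, hy, hy', add_zero]
  | h_hom j y hy =>
    rcases eq_or_ne (k + j) N with hkj | hkj
    · rw [← P.phi_comp_mul hy hkj x]; exact hx y
    · exact P.phi_hom (comp_mem k x) hy hkj

theorem comp_mem_J {x : A.carrier} (hx : x ∈ P.J) (k : ℕ) : comp A k x ∈ P.J := by
  refine ⟨P.orth_comp hx.1 k, ?_⟩
  rw [← comp_d]
  exact P.orth_comp hx.2 (k + 1)

theorem mul_mem_J_right {x : A.carrier} (hx : x ∈ P.J) (z : A.carrier) : x * z ∈ P.J := by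
  -- reduce to homogeneous x
  have key : ∀ k, ∀ x ∈ P.J, x ∈ A.grading k → x * z ∈ P.J := by
    intro k x hxJ hxk
    refine ⟨fun y => ?_, ?_⟩
    · rw [mul_assoc]; exact hxJ.1 (z * y)
    · rw [A.leibniz hxk]
      have h1 : P.Orth (A.d x * z) := fun y => by rw [mul_assoc]; exact hxJ.2 (z * y)
      have h2 : P.Orth (x * A.d z) := fun y => by rw [mul_assoc]; exact hxJ.1 (A.d z * y)
      intro y
      rw [add_mul, map_add, h1 y, smul_mul_assoc, map_smul, h2 y, smul_zero, add_zero]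
  have hcomps : ∀ k, (comp A k x) * z ∈ P.J := fun k => key k _ (P.comp_mem_J hx k) (comp_mem k x)
  -- sum the components
  classical
  letI := dec A
  have hx' : x * z = ∑ i ∈ (DirectSum.decompose A.grading x).support,
      (comp A i x) * z := by
    conv_lhs => rw [← DirectSum.sum_support_decompose A.grading x]
    rw [Finset.sum_mul]
    rfl
  rw [hx']
  exact Submodule.sum_mem _ fun i _ => hcomps i

theorem mul_mem_J_left {x : A.carrier} (hx : x ∈ P.J) (z : A.carrier) : z * x ∈ P.J := by
  have key : ∀ m k (z x : A.carrier), x ∈ P.J → x ∈ A.grading k → z ∈ A.grading m →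
      z * x ∈ P.J := by
    intro m k z x hxJ hxk hzm
    rw [A.gcomm hzm hxk]
    exact P.J.smul_mem _ (P.mul_mem_J_right hxJ z)
  have keyx : ∀ m (z : A.carrier), z ∈ A.grading m → z * x ∈ P.J := by
    intro m z hzm
    classical
    letI := dec A
    have hx' : z * x = ∑ i ∈ (DirectSum.decompose A.grading x).support,
        z * (comp A i x) := by
      conv_lhs => rw [← DirectSum.sum_support_decompose A.grading x]
      rw [Finset.mul_sum]
      rfl
    rw [hx']
    exact Submodule.sum_mem _ fun i _ =>
      key m i z _ (P.comp_mem_J hx i) (comp_mem i x) hzm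
  induction z using hom_induction with
  | h_zero => rw [zero_mul]; exact P.J.zero_mem
  | h_add z z' hz hz' => rw [add_mul]; exact P.J.add_mem hz hz'
  | h_hom m z hzm => exact keyx m z hzm

theorem mem_J_of_deg_gt {k : ℕ} {x : A.carrier} (hx : x ∈ A.grading k) (hk : N < k) :
    x ∈ P.J :=
  ⟨P.orth_of_deg_gt hx hk, P.orth_of_deg_gt (A.d_deg hx) (by omega)⟩

theorem eq_zero_of_mem_J_grading_zero {x : A.carrier} (hx : x ∈ P.J) (h0 : x ∈ A.grading 0) :
    x = 0 := by
  obtain ⟨q, rfl⟩ := A.connected x h0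
  have := hx.1 ν
  rw [smul_mul_assoc, one_mul, map_smul, P.map_ν, smul_eq_mul, mul_one] at this
  rw [this, zero_smul]

theorem mem_J_of_grading_N (hν : ν ∈ A.grading N) {x : A.carrier} (hx : x ∈ A.grading N)
    (h : ∀ u ∈ A.grading 0, P.φ (x * u) = 0) : x ∈ P.J := by
  refine ⟨P.orth_reduce hx le_rfl (by simpa using h), P.orth_of_deg_gt (A.d_deg hx) (by omega)⟩

theorem sub_phi_smul_mem_J (hν : ν ∈ A.grading N) {x : A.carrier} (hx : x ∈ A.grading N) :
    x - P.φ x • ν ∈ P.J := by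
  refine P.mem_J_of_grading_N hν (Submodule.sub_mem _ hx (Submodule.smul_mem _ _ hν)) ?_
  intro u hu
  obtain ⟨q, rfl⟩ := A.connected u hu
  rw [mul_smul_comm, mul_one, map_smul, map_sub, map_smul, P.map_ν]
  simp

theorem nu_not_mem_J (hνmem : ν ∈ A.grading N) : ν ∉ P.J := by
  intro h
  have := P.phi_eq_zero_of_mem_J h
  rw [P.map_ν] at this
  exact one_ne_zero this

end PhiData


theorem comp_eq_zero_of_mem_iSup_ne {k : ℕ} {b : A.carrier}
    (hb : b ∈ ⨆ j, ⨆ (_ : j ≠ k), A.grading j) : comp A k b = 0 := by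
  refine Submodule.iSup_induction (motive := fun z => comp A k z = 0)
    (fun j => ⨆ (_ : j ≠ k), A.grading j) hb ?_ (map_zero _) ?_
  · intro j x hx
    have hx' : x ∈ ⨆ (_ : j ≠ k), A.grading j := hx
    rcases eq_or_ne j k with rfl | hj
    · rw [iSup_neg (not_not_intro rfl)] at hx'
      rw [Submodule.mem_bot] at hx'
      rw [hx', map_zero]
    · rw [iSup_pos hj] at hx'
      exact comp_of_mem_ne hx' hj
  · intro x y hx hy
    rw [map_add, hx, hy, add_zero]

/-- A graded differential two-sided ideal with trivial degree-0 part. -/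
structure DGIdeal (A : ConnectedDGA) where
  J : Submodule ℚ A.carrier
  mul_left : ∀ (z : A.carrier) ⦃x : A.carrier⦄, x ∈ J → z * x ∈ J
  mul_right : ∀ (z : A.carrier) ⦃x : A.carrier⦄, x ∈ J → x * z ∈ J
  d_mem : ∀ ⦃x : A.carrier⦄, x ∈ J → A.d x ∈ J
  compat : ∀ (k : ℕ) ⦃x : A.carrier⦄, x ∈ J → comp A k x ∈ J

namespace DGIdeal

variable (I : DGIdeal A)

/-- The ring congruence associated to the ideal. -/
def con : RingCon A.carrier where
  r a b := a - b ∈ I.J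
  iseqv := by
    refine ⟨fun a => by simp, fun {a b} h => ?_, fun {a b c} h h' => ?_⟩
    · have := I.J.neg_mem h
      simpa using this
    · have := I.J.add_mem h h'
      simpa using this
  add' := by
    intro a b c' d' h h'
    have hs := I.J.add_mem h h'
    have heq : a - b + (c' - d') = a + c' - (b + d') := by abel
    rwa [heq] at hs
  mul' := by
    intro a b c' d' h h'
    have h1 : a * (c' - d') ∈ I.J := I.mul_left a h'
    have h2 : (a - b) * d' ∈ I.J := I.mul_right d' h
    have hs := I.J.add_mem h1 h2
    have heq : a * (c' - d') + (a - b) * d' = a * c' - b * d' := by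
      rw [mul_sub, sub_mul]; abel
    rwa [heq] at hs

instance : Module ℚ I.con.Quotient :=
  Function.Surjective.module ℚ (I.con.mk' : A.carrier →+* I.con.Quotient).toAddMonoidHom
    (fun x => Quot.inductionOn x fun a => ⟨a, rfl⟩) (fun _ _ => rfl)

instance : Algebra ℚ I.con.Quotient := by
  refine Algebra.ofModule (fun r x y => ?_) (fun r x y => ?_)
  · refine Quot.induction_on₂ x y fun a b => ?_
    exact congrArg I.con.toQuotient (smul_mul_assoc r a b)
  · refine Quot.induction_on₂ x y fun a b => ?_
    exact congrArg I.con.toQuotient (mul_smul_comm r a b)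

/-- The quotient map as a linear map. -/
def πₗ : A.carrier →ₗ[ℚ] I.con.Quotient where
  toFun a := (a : I.con.Quotient)
  map_add' a b := rfl
  map_smul' r a := rfl

theorem π_surjective : Function.Surjective (I.πₗ) := fun x => Quot.inductionOn x fun a => ⟨a, rfl⟩

theorem π_eq_iff (a b : A.carrier) : I.πₗ a = I.πₗ b ↔ a - b ∈ I.J := I.con.eq

theorem π_eq_zero_iff (a : A.carrier) : I.πₗ a = 0 ↔ a ∈ I.J := by
  have h0 : (0 : I.con.Quotient) = I.πₗ 0 := rfl
  rw [h0, I.π_eq_iff, sub_zero]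

/-- The differential on the quotient. -/
def dQ : I.con.Quotient →ₗ[ℚ] I.con.Quotient where
  toFun := Quot.lift (fun a => ((A.d a : A.carrier) : I.con.Quotient)) (by
    intro a b hab
    have hJ : a - b ∈ I.J := hab
    have hd : A.d a - A.d b ∈ I.J := by
      have := I.d_mem hJ
      rwa [map_sub] at this
    exact Quot.sound hd)
  map_add' x y := by
    refine Quot.induction_on₂ x y fun a b => ?_
    exact congrArg I.con.toQuotient (map_add A.d a b)
  map_smul' r x := by
    refine Quot.induction_on x fun a => ?_
    show ((A.d (r • a) : A.carrier) : I.con.Quotient) = r • ((A.d a : A.carrier) : I.con.Quotient)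
    rw [map_smul A.d r a]
    exact rfl

theorem dQ_π (a : A.carrier) : I.dQ (I.πₗ a) = I.πₗ (A.d a) := rfl

theorem π_mul (a b : A.carrier) : I.πₗ (a * b) = I.πₗ a * I.πₗ b := rfl

theorem π_one : I.πₗ 1 = 1 := rfl


theorem quot_internal : DirectSum.IsInternal (fun k => (A.grading k).map I.πₗ) := by
  rw [DirectSum.isInternal_submodule_iff_iSupIndep_and_iSup_eq_top]
  constructor
  · intro k
    rw [disjoint_iff_inf_le]
    intro x hx
    obtain ⟨hx1, hx2⟩ := Submodule.mem_inf.mp hx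
    obtain ⟨a, ha, rfl⟩ := hx1
    have hle : (⨆ j, ⨆ (_ : j ≠ k), Submodule.map I.πₗ (A.grading j)) ≤
        Submodule.map I.πₗ (⨆ j, ⨆ (_ : j ≠ k), A.grading j) :=
      iSup_le fun j => iSup_le fun hj => Submodule.map_mono
        (le_iSup_of_le j (le_iSup_of_le hj le_rfl))
    obtain ⟨b, hb, hba⟩ := hle hx2
    have hJ : b - a ∈ I.J := (I.π_eq_iff b a).mp hba
    have hcomp := I.compat k hJ
    rw [map_sub, comp_of_mem ha, comp_eq_zero_of_mem_iSup_ne hb, zero_sub] at hcomp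
    have haJ : a ∈ I.J := by simpa using I.J.neg_mem hcomp
    rw [Submodule.mem_bot, I.π_eq_zero_iff a]
    exact haJ
  · rw [← Submodule.map_iSup, A.internal.submodule_iSup_eq_top, Submodule.map_top,
      LinearMap.range_eq_top.mpr I.π_surjective]

theorem quot_gcomm {i j : ℕ} {x y : I.con.Quotient} (hx : x ∈ (A.grading i).map I.πₗ)
    (hy : y ∈ (A.grading j).map I.πₗ) : x * y = ((-1 : ℚ) ^ (i * j)) • (y * x) := by
  obtain ⟨a, ha, rfl⟩ := hx
  obtain ⟨b, hb, rfl⟩ := hy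
  rw [← I.π_mul, ← I.π_mul, A.gcomm ha hb, map_smul]

theorem quot_connected : ∀ x ∈ (A.grading 0).map I.πₗ, ∃ q : ℚ, x = q • (1 : I.con.Quotient) := by
  rintro x ⟨a, ha, rfl⟩
  obtain ⟨q, rfl⟩ := A.connected a ha
  exact ⟨q, by rw [map_smul]; exact congrArg (fun t => q • t) I.π_one⟩

theorem quot_d_sq (x : I.con.Quotient) : I.dQ (I.dQ x) = 0 := by
  obtain ⟨a, rfl⟩ := I.π_surjective x
  rw [I.dQ_π, I.dQ_π, A.d_sq, map_zero]

theorem quot_leibniz {i : ℕ} {x y : I.con.Quotient} (hx : x ∈ (A.grading i).map I.πₗ) :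
    I.dQ (x * y) = I.dQ x * y + ((-1 : ℚ) ^ i) • (x * I.dQ y) := by
  obtain ⟨a, ha, rfl⟩ := hx
  obtain ⟨b, rfl⟩ := I.π_surjective y
  rw [← I.π_mul, I.dQ_π, A.leibniz ha, map_add, map_smul, I.π_mul, I.π_mul, I.dQ_π, I.dQ_π]

theorem quot_mul_mem {i j : ℕ} {x y : I.con.Quotient} (hx : x ∈ (A.grading i).map I.πₗ)
    (hy : y ∈ (A.grading j).map I.πₗ) : x * y ∈ (A.grading (i + j)).map I.πₗ := by
  obtain ⟨a, ha, rfl⟩ := hx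
  obtain ⟨b, hb, rfl⟩ := hy
  exact ⟨a * b, A.mul_mem ha hb, rfl⟩

theorem quot_d_deg {k : ℕ} {x : I.con.Quotient} (hx : x ∈ (A.grading k).map I.πₗ) :
    I.dQ x ∈ (A.grading (k + 1)).map I.πₗ := by
  obtain ⟨a, ha, rfl⟩ := hx
  exact ⟨A.d a, A.d_deg ha, rfl⟩

/-- The quotient connected DGA. -/
noncomputable def quot : ConnectedDGA where
  carrier := I.con.Quotient
  grading k := (A.grading k).map I.πₗ
  internal := I.quot_internal
  one_mem := ⟨1, A.one_mem, rfl⟩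
  mul_mem hx hy := I.quot_mul_mem hx hy
  gcomm hx hy := I.quot_gcomm hx hy
  connected := I.quot_connected
  d := I.dQ
  d_deg hx := I.quot_d_deg hx
  d_sq := I.quot_d_sq
  leibniz hx := I.quot_leibniz hx


def πₐ : A.carrier →ₐ[ℚ] I.con.Quotient where
  toRingHom := I.con.mk'
  commutes' := by
    intro r
    have h1 : algebraMap ℚ A.carrier r = r • (1 : A.carrier) := Algebra.algebraMap_eq_smul_one r
    have h2 : algebraMap ℚ I.con.Quotient r = r • (1 : I.con.Quotient) :=
      Algebra.algebraMap_eq_smul_one r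
    show I.πₗ (algebraMap ℚ A.carrier r) = algebraMap ℚ I.con.Quotient r
    rw [h1, h2, map_smul]
    exact congrArg (fun t => r • t) I.π_one

theorem πₐ_eq (a : A.carrier) : I.πₐ a = I.πₗ a := rfl

theorem quot_cob_iff (a : A.carrier) :
    (I.quot).IsCoboundary (I.πₗ a) ↔ ∃ y, A.d y - a ∈ I.J := by
  constructor
  · rintro ⟨yb, hyb⟩
    obtain ⟨y, rfl⟩ := I.π_surjective yb
    have hyb' : I.πₗ (A.d y) = I.πₗ a := hyb
    exact ⟨y, (I.π_eq_iff _ _).mp hyb'⟩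
  · rintro ⟨y, hy⟩
    exact ⟨I.πₗ y, (I.π_eq_iff _ _).mpr hy⟩

theorem quot_d_eq : (I.quot).d = I.dQ := rfl

theorem quot_grading_eq (k : ℕ) : (I.quot).grading k = (A.grading k).map I.πₗ := rfl

end DGIdeal

end PDProof

/-- A weight on a connected dga: a bigraded decomposition compatible with `d` and products. -/
structure Weight (A : ConnectedDGA) where
  w : ℕ → ℤ → Submodule ℚ A.carrier
  internal : DirectSum.IsInternal (fun p : ℕ × ℤ => w p.1 p.2)
  grading_eq : ∀ k, A.grading k = ⨆ n, w k n
  d_mem : ∀ {k : ℕ} {n : ℤ} {x : A.carrier}, x ∈ w k n → A.d x ∈ w (k + 1) n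
  mul_mem : ∀ {k l : ℕ} {n m : ℤ} {x y : A.carrier},
      x ∈ w k n → y ∈ w l m → x * y ∈ w (k + l) (n + m)

namespace Weight

/-- The weight-`n` part of `A`. An element of `piece n` (nonzero) is `ω`-homogeneous
of weight `n`. -/
def piece {A : ConnectedDGA} (W : Weight A) (n : ℤ) : Submodule ℚ A.carrier := ⨆ k, W.w k n

/-- A weight is positive if the negative pieces vanish and the weight `0` piece is `A^0`. -/
def Positive {A : ConnectedDGA} (W : Weight A) : Prop :=
  (∀ n : ℤ, n < 0 → W.piece n = ⊥) ∧ W.piece 0 = A.grading 0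

end Weight

/-- A dga morphism: degree-preserving algebra homomorphism commuting with differentials. -/
structure Hom (A B : ConnectedDGA) where
  toFun : A.carrier →ₐ[ℚ] B.carrier
  map_grading : ∀ {k : ℕ} {x : A.carrier}, x ∈ A.grading k → toFun x ∈ B.grading k
  map_d : ∀ x, B.d (toFun x) = toFun (A.d x)

/-- `ν` is a representative of the fundamental class of a dga whose cohomology is a
Poincaré duality algebra of formal dimension `N`. -/
structure PoincareDuality (A : ConnectedDGA) (N : ℕ) (ν : A.carrier) : Prop where
  mem : ν ∈ A.grading N
  cocycle : A.d ν = 0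
  not_bdry : ¬ A.IsCoboundary ν
  top_vanish : ∀ k : ℕ, N < k → ∀ x ∈ A.grading k, A.d x = 0 → A.IsCoboundary x
  top_span : ∀ x ∈ A.grading N, A.d x = 0 → ∃ q : ℚ, A.IsCoboundary (x - q • ν)
  nondeg : ∀ k : ℕ, k ≤ N → ∀ x ∈ A.grading k, A.d x = 0 → ¬ A.IsCoboundary x →
      ∃ y ∈ A.grading (N - k), A.d y = 0 ∧ ¬ A.IsCoboundary (x * y)

/-- any nonzero cohomology class `[ν] ∈ H^N` of a simply-connected finite type
dga, `N ≥ 4`, is detected by a dga with Poincaré duality cohomology of formal dimension `N`: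
there are such `(B,d)` and a dga morphism `q : A → B` with `H^N(q)([ν]) ≠ 0`, a nonzero
multiple of the fundamental class. -/
theorem class_detected_by_poincare_duality_dga (A : ConnectedDGA)
    (hsc : A.grading 1 = ⊥) (hft : ∀ k, FiniteDimensional ℚ (A.grading k))
    (N : ℕ) (hN : 4 ≤ N) (ν : A.carrier) (hν : ν ∈ A.grading N) (hc : A.d ν = 0)
    (hnz : ¬ A.IsCoboundary ν) :
    ∃ (B : ConnectedDGA) (μ : B.carrier) (q : Hom A B),
      PoincareDuality B N μ ∧ ¬ B.IsCoboundary (q.toFun ν) ∧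
      ∃ c : ℚ, c ≠ 0 ∧ B.IsCoboundary (q.toFun ν - c • μ) := by
  classical
  obtain ⟨P⟩ := PDProof.exists_phiData hν (by omega) hnz
  set I : PDProof.DGIdeal A := ⟨P.J, fun z x hx => P.mul_mem_J_left hx z,
    fun z x hx => P.mul_mem_J_right hx z, fun x hx => P.d_mem_J hx,
    fun k x hx => P.comp_mem_J hx k⟩ with hI
  refine ⟨I.quot, I.πₗ ν, ⟨I.πₐ, fun {k x} hx => ⟨x, hx, rfl⟩, fun x => rfl⟩, ?_, ?_, ?_⟩
  · -- Poincaré duality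
    refine ⟨⟨ν, hν, rfl⟩, ?_, ?_, ?_, ?_, ?_⟩
    · show I.dQ (I.πₗ ν) = 0
      rw [I.dQ_π, hc, map_zero]
    · rw [I.quot_cob_iff]
      rintro ⟨y, hy⟩
      have h0 := P.phi_eq_zero_of_mem_J hy
      rw [map_sub, P.vanish_d, P.map_ν, zero_sub, neg_eq_zero] at h0
      exact one_ne_zero h0
    · -- top_vanish
      intro k hk x hxk hdx
      obtain ⟨a, ha, rfl⟩ := hxk
      refine ⟨0, ?_⟩
      rw [map_zero]
      exact ((I.π_eq_zero_iff a).mpr (P.mem_J_of_deg_gt ha hk)).symm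
    · -- top_span
      intro x hxk hdx
      obtain ⟨a, ha, rfl⟩ := hxk
      refine ⟨P.φ a, 0, ?_⟩
      rw [map_zero]
      have hπ : I.πₗ a - P.φ a • I.πₗ ν = I.πₗ (a - P.φ a • ν) := by rw [map_sub, map_smul]
      refine Eq.trans ?_ hπ.symm
      exact ((I.π_eq_zero_iff _).mpr (P.sub_phi_smul_mem_J hν ha)).symm
    · -- nondegeneracy
      intro k hkN xb hxb hdxb hncob
      obtain ⟨x, hx, rfl⟩ := hxb
      have hdxJ : A.d x ∈ P.J := by
        have h0 : I.πₗ (A.d x) = 0 := hdxb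
        exact (I.π_eq_zero_iff _).mp h0
      by_cases hcase : ∃ u ∈ A.grading (N - k), A.d u ∈ P.J ∧ P.φ (x * u) ≠ 0
      · obtain ⟨u, hu, hduJ, hphi⟩ := hcase
        refine ⟨I.πₗ u, ⟨u, hu, rfl⟩, ?_, ?_⟩
        · show I.dQ (I.πₗ u) = 0
          rw [I.dQ_π]
          exact (I.π_eq_zero_iff _).mpr hduJ
        · have hmul : I.πₗ x * I.πₗ u = I.πₗ (x * u) := (I.π_mul x u).symm
          change ¬ I.quot.IsCoboundary (I.πₗ (x * u))
          rw [I.quot_cob_iff]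
          rintro ⟨y, hy⟩
          have h0 := P.phi_eq_zero_of_mem_J hy
          rw [map_sub, P.vanish_d, zero_sub, neg_eq_zero] at h0
          exact hphi h0
      · push_neg at hcase
        exfalso
        rcases Nat.eq_zero_or_pos k with rfl | hk1
        · obtain ⟨qx, rfl⟩ := A.connected x hx
          rcases eq_or_ne qx 0 with rfl | hq
          · apply hncob
            refine ⟨0, ?_⟩
            rw [zero_smul, map_zero, map_zero]
            exact rfl
          · have hν0 : ν ∈ A.grading (N - 0) := by rwa [Nat.sub_zero]
            have hz0 := hcase ν hν0 (by rw [hc]; exact P.J.zero_mem)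
            rw [smul_mul_assoc, one_mul, map_smul, P.map_ν, smul_eq_mul, mul_one] at hz0
            exact hq hz0
        · haveI : FiniteDimensional ℚ (A.grading (N - k + 1)) := hft _
          have hdmem : ∀ v ∈ A.grading (N - k), A.d v ∈ A.grading (N - k + 1) :=
            fun v hv => A.d_deg hv
          set D : A.grading (N - k) →ₗ[ℚ] A.grading (N - k + 1) := A.d.restrict hdmem with hD
          set β : A.carrier →ₗ[ℚ] A.carrier →ₗ[ℚ] ℚ :=
            (LinearMap.mul ℚ A.carrier).compr₂ P.φ with hβ
          set f : A.grading (N - k) →ₗ[ℚ] ℚ := (β x).comp (A.grading (N - k)).subtype with hf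
          set Ψ : A.carrier →ₗ[ℚ] Module.Dual ℚ (A.grading (N - k + 1)) :=
            { toFun := fun a => (β a).comp (A.grading (N - k + 1)).subtype
              map_add' := fun a b => by ext w; simp [map_add]
              map_smul' := fun r a => by ext w; simp [map_smul] } with hΨ
          set G := (A.grading (k - 1)).map Ψ with hG
          have hsub : N - (N - k + 1) = k - 1 := by omega
          have hyp : ∀ v : A.grading (N - k), (∀ g ∈ G, g (D v) = 0) → f v = 0 := by
            intro v hg
            have hOrth : P.Orth (A.d (v : A.carrier)) := by
              refine P.orth_reduce (A.d_deg v.2) (by omega) ?_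
              intro u hu
              have hu' : u ∈ A.grading (k - 1) := by rwa [hsub] at hu
              have hg'' : P.φ (u * A.d (v : A.carrier)) = 0 := hg (Ψ u) ⟨u, hu', rfl⟩
              rw [A.gcomm (A.d_deg v.2) hu', map_smul, smul_eq_mul, hg'', mul_zero]
            have hduJ : A.d (v : A.carrier) ∈ P.J :=
              ⟨hOrth, fun y => by rw [A.d_sq, zero_mul, map_zero]⟩
            exact hcase (v : A.carrier) v.2 hduJ
          obtain ⟨g, hgG, hgf⟩ := PDProof.dual_factor D f G hyp
          obtain ⟨z, hz, rfl⟩ := hgG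
          have hk' : k - 1 + 1 = k := by omega
          have hdz : A.d z ∈ A.grading k := by
            have h := A.d_deg hz; rwa [hk'] at h
          have hpow : (-1:ℚ)^k * (-1:ℚ)^k = 1 := by
            rw [← pow_add]
            exact Even.neg_one_pow ⟨k, rfl⟩
          have hsign : ∀ u, P.φ (A.d z * u) = (-1:ℚ)^k * P.φ (z * A.d u) := by
            intro u
            have h0 := P.vanish_d (z * u)
            rw [A.leibniz hz, map_add, map_smul, smul_eq_mul] at h0
            have hpow2 : (-1:ℚ)^(k-1) = -((-1:ℚ)^k) := by
              conv_rhs => rw [← hk', pow_succ]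
              ring
            rw [hpow2] at h0
            linear_combination h0
          have hxu : ∀ u (hu : u ∈ A.grading (N - k)), P.φ (z * A.d u) = P.φ (x * u) := by
            intro u hu
            exact hgf ⟨u, hu⟩
          have hmemJ : x - ((-1:ℚ)^k) • A.d z ∈ P.J := by
            constructor
            · refine P.orth_reduce
                (Submodule.sub_mem _ hx (Submodule.smul_mem _ _ hdz)) hkN ?_
              intro u hu
              rw [sub_mul, map_sub, smul_mul_assoc, map_smul, smul_eq_mul, hsign u,
                ← mul_assoc, hpow, one_mul, hxu u hu, sub_self]
            · have hdd : A.d (x - ((-1:ℚ)^k) • A.d z) = A.d x := by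
                rw [map_sub, map_smul, show A.d (A.d z) = 0 from A.d_sq z, smul_zero, sub_zero]
              rw [hdd]
              exact hdxJ.1
          apply hncob
          refine ⟨I.πₗ (((-1:ℚ)^k) • z), ?_⟩
          show I.dQ (I.πₗ (((-1:ℚ)^k) • z)) = I.πₗ x
          rw [I.dQ_π, I.π_eq_iff, map_smul]
          have heq : ((-1:ℚ)^k) • A.d z - x = -(x - ((-1:ℚ)^k) • A.d z) := (neg_sub _ _).symm
          rw [heq]
          exact P.J.neg_mem hmemJ
  · -- q ν not a coboundary
    show ¬ (I.quot).IsCoboundary (I.πₐ ν)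
    rw [I.πₐ_eq, I.quot_cob_iff]
    rintro ⟨y, hy⟩
    have h0 := P.phi_eq_zero_of_mem_J hy
    rw [map_sub, P.vanish_d, P.map_ν, zero_sub, neg_eq_zero] at h0
    exact one_ne_zero h0
  · refine ⟨1, one_ne_zero, 0, ?_⟩
    rw [map_zero]
    show (0 : I.con.Quotient) = I.πₐ ν - (1:ℚ) • I.πₗ ν
    rw [one_smul]
    exact (sub_eq_zero_of_eq rfl).symm
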